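/- Let i ≥ 1 and e ≥ 1 be integers and set d := i·e. Let F ∈ R[x] be the remainder of q(i·x) under division by the monic polynomial Q_e(x), so deg F ≤ e. Then the coefficient of x^e in F equals i^e·∏_{0 ≤ j ≤ d, i ∤ j} (j·u + (d−j)·v). -/

import Mathlib

noncomputable section

abbrev R2 : Type := MvPolynomial (Fin 2) ℚ

def uu : R2 := MvPolynomial.X 0
def vv : R2 := MvPolynomial.X 1

/-- The involution of `R2 = ℚ[u,v]` swapping `u` and `v`; `P*`. -/
def swapUV (P : R2) : R2 := MvPolynomial.rename (Equiv.swap (0 : Fin 2) 1) P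

/-- `Q_k(y) = ∏_{j=0}^{k} (y + j·u + (k−j)·v)` in `R2[y]`. -/
def Qp (k : ℕ) : Polynomial R2 :=
  ∏ j ∈ Finset.range (k + 1),
    (Polynomial.X + Polynomial.C ((j : R2) * uu + ((k - j : ℕ) : R2) * vv))

/-- `C_{d+1} = ∏_{j=0}^{d} (j·u + (d−j)·v)` in `R2`. -/
def Cdtop (d : ℕ) : R2 :=
  ∏ j ∈ Finset.range (d + 1), ((j : R2) * uu + ((d - j : ℕ) : R2) * vv)

/-- `Q_k(x_i)` as an element of `R2[x_1,…,x_r]`. -/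
def Qm (r k : ℕ) (i : Fin r) : MvPolynomial (Fin r) R2 :=
  ∏ j ∈ Finset.range (k + 1),
    (MvPolynomial.X i + MvPolynomial.C ((j : R2) * uu + ((k - j : ℕ) : R2) * vv))

open Polynomial Finset

lemma monic_Qp (k : ℕ) : (Qp k).Monic :=
  monic_prod_of_monic _ _ (fun j _ => monic_X_add_C _)

lemma natDegree_Qp (k : ℕ) : (Qp k).natDegree = k + 1 := by
  rw [Qp, natDegree_prod _ _ (fun j _ => (monic_X_add_C _).ne_zero)]
  simp only [natDegree_X_add_C, Finset.sum_const, Finset.card_range, smul_eq_mul, mul_one]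

lemma eval_zero_Qp (k : ℕ) : (Qp k).eval 0 = Cdtop k := by
  rw [Qp, eval_prod, Cdtop]
  simp

lemma coeff_zero_Qp (k : ℕ) : (Qp k).coeff 0 = Cdtop k := by
  rw [coeff_zero_eq_eval_zero, eval_zero_Qp]

lemma lin_ne_zero (k j : ℕ) (hk : 1 ≤ k) (hj : j < k + 1) :
    (j : R2) * uu + ((k - j : ℕ) : R2) * vv ≠ 0 := by
  intro h
  have h2 := congrArg (MvPolynomial.eval (fun _ => (1 : ℚ))) h
  simp [uu, vv] at h2
  have h3 : ((j + (k - j) : ℕ) : ℚ) = 0 := by push_cast; linarith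
  have h4 : j + (k - j) = 0 := Nat.cast_injective (by exact_mod_cast h3)
  omega

lemma filter_dvd_eq (i e d : ℕ) (hi : 1 ≤ i) (hd : d = i * e) :
    (Finset.range (d + 1)).filter (fun j => i ∣ j)
      = (Finset.range (e + 1)).image (fun m => i * m) := by
  ext j
  simp only [mem_filter, mem_range, mem_image, Nat.lt_succ_iff]
  constructor
  · rintro ⟨hj, m, rfl⟩
    exact ⟨m, Nat.le_of_mul_le_mul_left (hd ▸ hj) hi, rfl⟩
  · rintro ⟨m, hm, rfl⟩
    exact ⟨hd ▸ Nat.mul_le_mul_left i hm, dvd_mul_right i m⟩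

lemma Qp_comp_factor (i e d : ℕ) (hi : 1 ≤ i) (hd : d = i * e) :
    (Qp d).comp (Polynomial.C (i : R2) * Polynomial.X) =
      Polynomial.C ((i : R2) ^ (e + 1)) * Qp e *
        ∏ j ∈ (Finset.range (d + 1)).filter (fun j => ¬ i ∣ j),
          (Polynomial.C (i : R2) * Polynomial.X +
            Polynomial.C ((j : R2) * uu + ((d - j : ℕ) : R2) * vv)) := by
  rw [Qp, Polynomial.prod_comp]
  simp only [add_comp, X_comp, C_comp]
  rw [← Finset.prod_filter_mul_prod_filter_not (Finset.range (d + 1)) (fun j => i ∣ j)]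
  congr 1
  rw [filter_dvd_eq i e d hi hd, Finset.prod_image (fun m _ n _ h =>
    Nat.eq_of_mul_eq_mul_left hi h)]
  have key : ∀ m ∈ Finset.range (e + 1),
      Polynomial.C (i : R2) * Polynomial.X +
        Polynomial.C (((i * m : ℕ) : R2) * uu + ((d - i * m : ℕ) : R2) * vv)
      = Polynomial.C (i : R2) *
        (Polynomial.X + Polynomial.C ((m : R2) * uu + ((e - m : ℕ) : R2) * vv)) := by
    intro m _
    have h1 : d - i * m = i * (e - m) := by rw [hd, Nat.mul_sub]
    rw [h1]
    push_cast
    have h2 : ((i : R2) * (m : R2) * uu + (i : R2) * ((e - m : ℕ) : R2) * vv)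
        = (i : R2) * ((m : R2) * uu + ((e - m : ℕ) : R2) * vv) := by ring
    rw [h2, map_mul]
    ring
  rw [Finset.prod_congr rfl key, Finset.prod_mul_distrib, Finset.prod_const,
    Finset.card_range, ← Qp, map_pow]

lemma Cdtop_factor (i e d : ℕ) (hi : 1 ≤ i) (hd : d = i * e) :
    Cdtop d = (i : R2) ^ (e + 1) * Cdtop e *
      ∏ j ∈ (Finset.range (d + 1)).filter (fun j => ¬ i ∣ j),
        ((j : R2) * uu + ((d - j : ℕ) : R2) * vv) := by
  have h := congrArg (Polynomial.eval 0) (Qp_comp_factor i e d hi hd)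
  simpa [eval_comp, eval_prod, eval_zero_Qp] using h

/-- Example 3.5: the Thom polynomial of the partition `λ = (i^e)` of `d = i·e`. -/
theorem stmt4 (i e : ℕ) (hi : 1 ≤ i) (he : 1 ≤ e) (d : ℕ) (hd : d = i * e)
    (q : Polynomial R2) (hq : Polynomial.X * q = Qp d - Polynomial.C (Cdtop d))
    (F : Polynomial R2)
    (hF : F = (q.comp (Polynomial.C (i : R2) * Polynomial.X)) %ₘ Qp e) :
    F.coeff e = (i : R2) ^ e *
      ∏ j ∈ (Finset.range (d + 1)).filter (fun j => ¬ i ∣ j),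
        ((j : R2) * uu + ((d - j : ℕ) : R2) * vv) := by
  set G : Polynomial R2 :=
    ∏ j ∈ (Finset.range (d + 1)).filter (fun j => ¬ i ∣ j),
      (Polynomial.C (i : R2) * Polynomial.X +
        Polynomial.C ((j : R2) * uu + ((d - j : ℕ) : R2) * vv)) with hG
  set P : R2 :=
    ∏ j ∈ (Finset.range (d + 1)).filter (fun j => ¬ i ∣ j),
      ((j : R2) * uu + ((d - j : ℕ) : R2) * vv) with hP
  have hm : (Qp e).Monic := monic_Qp e
  set qc : Polynomial R2 := q.comp (Polynomial.C (i : R2) * Polynomial.X) with hqc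
  have hcomp : Polynomial.C (i : R2) * Polynomial.X * qc
      = Polynomial.C ((i : R2) ^ (e + 1)) * Qp e * G - Polynomial.C (Cdtop d) := by
    have h := congrArg (fun p : Polynomial R2 =>
      p.comp (Polynomial.C (i : R2) * Polynomial.X)) hq
    simp only [mul_comp, X_comp, sub_comp, C_comp, Qp_comp_factor i e d hi hd] at h
    linear_combination h
  have hdiv : qc = Qp e * (qc /ₘ Qp e) + F := by
    rw [hF]
    linear_combination (Polynomial.modByMonic_add_div qc (Qp e)).symm
  set W : Polynomial R2 := Polynomial.C ((i : R2) ^ (e + 1)) * G -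
    Polynomial.C (i : R2) * Polynomial.X * (qc /ₘ Qp e) with hW
  have hE : Polynomial.C (i : R2) * Polynomial.X * F + Polynomial.C (Cdtop d)
      = Qp e * W := by
    rw [hW]
    linear_combination hcomp - (Polynomial.C (i : R2) * Polynomial.X) * hdiv
  have hQne1 : Qp e ≠ 1 := by
    intro h
    have := natDegree_Qp e
    rw [h] at this
    simp at this
  have hdegF : F.natDegree ≤ e := by
    have := natDegree_modByMonic_lt qc hm hQne1
    rw [natDegree_Qp] at this
    rw [hF]; omega
  have hWC : W = Polynomial.C (W.coeff 0) := by
    by_cases h0 : W = 0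
    · rw [h0]; simp
    · have h1 : (Qp e * W).natDegree = e + 1 + W.natDegree := by
        rw [natDegree_mul hm.ne_zero h0, natDegree_Qp]
      have h2 : (Qp e * W).natDegree ≤ e + 1 := by
        rw [← hE]
        refine le_trans (natDegree_add_le _ _) ?_
        simp only [natDegree_C, max_le_iff]
        constructor
        · refine le_trans (natDegree_mul_le) ?_
          have : (Polynomial.C (i : R2) * Polynomial.X).natDegree ≤ 1 := by
            refine le_trans (natDegree_mul_le) ?_
            simp
          omega
        · omega
      have : W.natDegree = 0 := by omega
      exact eq_C_of_natDegree_eq_zero this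
  set w : R2 := W.coeff 0 with hw
  -- coefficient at e+1
  have hc1 : (i : R2) * F.coeff e = w := by
    have h := congrArg (fun p : Polynomial R2 => p.coeff (e + 1)) hE
    rw [hWC] at h
    simp only [coeff_add, mul_assoc, coeff_C_mul, coeff_X_mul, coeff_mul_C] at h
    rw [coeff_C] at h
    simp only [Nat.succ_ne_zero, if_false, add_zero] at h
    have hle : (Qp e).coeff (e + 1) = 1 := by
      have := hm.coeff_natDegree
      rwa [natDegree_Qp] at this
    rw [hle, one_mul] at h
    exact h
  -- coefficient at 0
  have hc0 : Cdtop d = Cdtop e * w := by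
    have h := congrArg (fun p : Polynomial R2 => p.coeff 0) hE
    rw [hWC] at h
    simp only [coeff_add, mul_coeff_zero, coeff_C_zero, coeff_X_zero,
      mul_zero, zero_mul, zero_add, coeff_zero_Qp] at h
    exact h
  have hCe : Cdtop e ≠ 0 := by
    rw [Cdtop]
    refine Finset.prod_ne_zero_iff.mpr ?_
    intro j hj
    exact lin_ne_zero e j he (Finset.mem_range.mp hj)
  have hfac := Cdtop_factor i e d hi hd
  rw [← hP] at hfac
  have hwval : w = (i : R2) ^ (e + 1) * P := by
    apply mul_left_cancel₀ hCe
    rw [← hc0, hfac]; ring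
  have hine : (i : R2) ≠ 0 := by
    have : ((i : ℕ) : R2) ≠ 0 := Nat.cast_ne_zero.mpr (by omega)
    exact this
  apply mul_left_cancel₀ hine
  rw [hc1, hwval]
  ring
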